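/- Let n be a natural number and f : Finset (Fin n) → Fin n → Prop a feasibility predicate, where f S o means that moving object o to its goal is feasible when exactly the objects of S have already been moved to their goals. Define the step relation on Finset (Fin n) by step S T ↔ ∃ o ∉ S, T = insert o S ∧ f S o. Then the following are equivalent: (1) there exists a list L of elements of Fin n with no duplicates whose elements are all of Fin n, such that for every index k < n, f ((L.take k).toFinset) (L.get k) holds; (2) Finset.univ is reachable from ∅ under the reflexive-transitive closure of step. In other words, the monotone instance admits a feasible solution ordering if and only if the full set is reachable from the empty set in the subset transition graph. -/

import Mathlib

theorem monotone_solution_iff_reachable (n : ℕ)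
    (f : Finset (Fin n) → Fin n → Prop) :
    (∃ L : List (Fin n), L.Nodup ∧ (∀ x : Fin n, x ∈ L) ∧
      ∀ k : Fin L.length, f ((L.take k).toFinset) (L.get k)) ↔
    Relation.ReflTransGen
      (fun S T : Finset (Fin n) => ∃ o, o ∉ S ∧ T = insert o S ∧ f S o)
      ∅ Finset.univ := by
  constructor
  · rintro ⟨L, hnd, hall, hf⟩
    have huniv : L.toFinset = Finset.univ := by
      ext x; simp [hall x]
    have key : ∀ k, k ≤ L.length → Relation.ReflTransGen
        (fun S T : Finset (Fin n) => ∃ o, o ∉ S ∧ T = insert o S ∧ f S o)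
        ∅ ((L.take k).toFinset) := by
      intro k hk
      induction k with
      | zero =>
        simp only [List.take_zero, List.toFinset_nil]
        exact Relation.ReflTransGen.refl
      | succ m ih =>
        have hm : m < L.length := hk
        refine (ih (le_of_lt hm)).tail ?_
        refine ⟨L.get ⟨m, hm⟩, ?_, ?_, hf ⟨m, hm⟩⟩
        · have h1 : (L.take (m+1)).Nodup := hnd.sublist (List.take_sublist _ _)
          rw [← List.take_concat_get hm, List.concat_eq_append] at h1
          have hd := List.disjoint_of_nodup_append h1
          intro hmem
          exact hd (by simpa using hmem) (List.mem_singleton_self _)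
        · ext x
          rw [List.take_succ]
          simp only [List.getElem?_eq_getElem hm, Option.toList_some, List.toFinset_append,
            Finset.mem_union, List.mem_toFinset, Finset.mem_insert, List.get_eq_getElem,
            List.toFinset_cons, List.toFinset_nil, LawfulSingleton.insert_empty_eq, Finset.mem_singleton]
          tauto
    have := key L.length le_rfl
    rwa [List.take_length, huniv] at this
  · intro h
    suffices H : ∀ S, Relation.ReflTransGen
        (fun S T : Finset (Fin n) => ∃ o, o ∉ S ∧ T = insert o S ∧ f S o)
        ∅ S →
        ∃ L : List (Fin n), L.Nodup ∧ L.toFinset = S ∧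
          ∀ k : Fin L.length, f ((L.take k).toFinset) (L.get k) by
      obtain ⟨L, hnd, hS, hf⟩ := H _ h
      exact ⟨L, hnd, fun x => by rw [← List.mem_toFinset, hS]; exact Finset.mem_univ x, hf⟩
    intro S hS
    induction hS with
    | refl => exact ⟨[], by simp⟩
    | tail h1 h2 ih =>
      obtain ⟨L, hnd, hT, hf⟩ := ih
      obtain ⟨o, ho, rfl, hfo⟩ := h2
      have hoL : o ∉ L := fun hm => ho (by rw [← hT]; exact List.mem_toFinset.mpr hm)
      refine ⟨L ++ [o], ?_, ?_, ?_⟩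
      · simp [List.nodup_append, hnd, hoL]
        exact fun a ha h => hoL (h ▸ ha)
      · ext x; simp [← hT, or_comm]
      · intro k
        have hk : (k : ℕ) < L.length + 1 := by simpa using k.isLt
        rcases Nat.lt_or_ge (k : ℕ) L.length with hlt | hge
        · have ht : (L ++ [o]).take k = L.take k :=
            List.take_append_of_le_length (le_of_lt hlt)
          have hg : (L ++ [o]).get k = L.get ⟨k, hlt⟩ := by
            simp [List.getElem_append_left hlt]
          rw [ht, hg]
          exact hf ⟨k, hlt⟩
        · have hkeq : (k : ℕ) = L.length := le_antisymm (Nat.lt_succ_iff.mp hk) hge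
          have ht : (L ++ [o]).take k = L := by
            rw [hkeq]; simp
          have hg : (L ++ [o]).get k = o := by
            
            simp [List.get_eq_getElem, hkeq]
          rw [ht, hg, hT]
          exact hfo
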